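/- Let k, ε, x₀, y₀, z₀ be real numbers with 0 < k < 2, and set ξ_k = √(4 − k²)/2. Define z(t) = z₀ + ε·t and x_R(t) = z(t) + k·ε + e^{(k/2)t}·[ (x₀ − z₀ − k·ε)·cos(ξ_k t) + ((k·(z₀ + k·ε + x₀) − 2·(y₀ + ε))/√(4 − k²))·sin(ξ_k t) ], y_R(t) = k·(z(t) + k·ε) − ε + e^{(k/2)t}·[ (−k·(z₀ + k·ε) + (y₀ + ε))·cos(ξ_k t) + ((k²·(z₀ + k·ε) − k·(y₀ + ε) + 2·(x₀ − z₀ − k·ε))/√(4 − k²))·sin(ξ_k t) ]. Then (x_R, y_R, z) satisfies x_R(0) = x₀, y_R(0) = y₀, z(0) = z₀, and for all t ∈ ℝ: x_R′(t) = k·x_R(t) − y_R(t), y_R′(t) = x_R(t) − z(t), z′(t) = ε. -/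

import Mathlib

private lemma aux_deriv (a b c A B ξ : ℝ) (t : ℝ) :
    HasDerivAt (fun s : ℝ => a + b * s +
      Real.exp (c * s) * (A * Real.cos (ξ * s) + B * Real.sin (ξ * s)))
      (b + Real.exp (c * t) * (c * (A * Real.cos (ξ * t) + B * Real.sin (ξ * t))
        + (B * ξ * Real.cos (ξ * t) - A * ξ * Real.sin (ξ * t)))) t := by
  have hct : HasDerivAt (fun s : ℝ => c * s) c t := by
    simpa using (hasDerivAt_id t).const_mul c
  have hξt : HasDerivAt (fun s : ℝ => ξ * s) ξ t := by
    simpa using (hasDerivAt_id t).const_mul ξ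
  have hexp := hct.exp
  have htrig := (hξt.cos.const_mul A).add (hξt.sin.const_mul B)
  have hlin : HasDerivAt (fun s : ℝ => a + b * s) b t := by
    exact ((hasDerivAt_const t a).add ((hasDerivAt_id' t).const_mul b)).congr_deriv (by simp)
  have h := hlin.add (hexp.mul htrig)
  exact h.congr_deriv (by simp only [Pi.add_apply]; ring)

/-- the explicit expressions `(x_R, y_R, z)` solve the right-region
linear system `x' = k·x - y`, `y' = x - z`, `z' = ε` with initial condition
`(x₀, y₀, z₀)`. -/
theorem stmt3 (k ε x₀ y₀ z₀ : ℝ) (hk0 : 0 < k) (hk2 : k < 2)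
    (ξ : ℝ) (hξ : ξ = Real.sqrt (4 - k ^ 2) / 2)
    (z xR yR : ℝ → ℝ)
    (hz : ∀ t, z t = z₀ + ε * t)
    (hx : ∀ t, xR t = z t + k * ε +
      Real.exp ((k / 2) * t) *
        ((x₀ - z₀ - k * ε) * Real.cos (ξ * t) +
          ((k * (z₀ + k * ε + x₀) - 2 * (y₀ + ε)) / Real.sqrt (4 - k ^ 2)) *
            Real.sin (ξ * t)))
    (hy : ∀ t, yR t = k * (z t + k * ε) - ε +
      Real.exp ((k / 2) * t) *
        ((-k * (z₀ + k * ε) + (y₀ + ε)) * Real.cos (ξ * t) +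
          ((k ^ 2 * (z₀ + k * ε) - k * (y₀ + ε) + 2 * (x₀ - z₀ - k * ε)) /
              Real.sqrt (4 - k ^ 2)) *
            Real.sin (ξ * t))) :
    xR 0 = x₀ ∧ yR 0 = y₀ ∧ z 0 = z₀ ∧
    ∀ t : ℝ,
      HasDerivAt xR (k * xR t - yR t) t ∧
      HasDerivAt yR (xR t - z t) t ∧
      HasDerivAt z ε t := by
  set u : ℝ := Real.sqrt (4 - k ^ 2) with hu
  have hknn : (0:ℝ) ≤ 4 - k ^ 2 := by nlinarith
  have hu0 : 0 < u := Real.sqrt_pos.mpr (by nlinarith)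
  have hs : u ^ 2 = 4 - k ^ 2 := Real.sq_sqrt hknn
  have hs2 : u = (4 - k ^ 2) / u := by
    field_simp
    nlinarith [hs]
  have hmul : u * u⁻¹ = 1 := mul_inv_cancel₀ hu0.ne'
  -- abbreviations
  set A : ℝ := x₀ - z₀ - k * ε with hA
  set Bx : ℝ := (k * (z₀ + k * ε + x₀) - 2 * (y₀ + ε)) / u with hBx
  set Ay : ℝ := -k * (z₀ + k * ε) + (y₀ + ε) with hAy
  set By : ℝ := (k ^ 2 * (z₀ + k * ε) - k * (y₀ + ε) + 2 * (x₀ - z₀ - k * ε)) / u with hBy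
  have hxf : xR = fun s : ℝ => (z₀ + k * ε) + ε * s +
      Real.exp ((k/2) * s) * (A * Real.cos (ξ * s) + Bx * Real.sin (ξ * s)) := by
    funext s; rw [hx s, hz s]; ring
  have hyf : yR = fun s : ℝ => (k * (z₀ + k * ε) - ε) + (k * ε) * s +
      Real.exp ((k/2) * s) * (Ay * Real.cos (ξ * s) + By * Real.sin (ξ * s)) := by
    funext s; rw [hy s, hz s]; ring
  have hzf : z = fun s : ℝ => z₀ + ε * s := funext hz
  refine ⟨?_, ?_, ?_, ?_⟩
  · rw [hx 0, hz 0]; simp; linarith [hA]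
  · rw [hy 0, hz 0]; simp; linarith [hAy]
  · rw [hz 0]; simp
  · intro t
    have hzd : HasDerivAt z ε t := by
      rw [hzf]
      exact ((hasDerivAt_const t z₀).add ((hasDerivAt_id' t).const_mul ε)).congr_deriv (by simp)
    refine ⟨?_, ?_, hzd⟩
    · have h := aux_deriv (z₀ + k * ε) ε (k/2) A Bx ξ t
      rw [← hxf] at h
      convert h using 1
      rw [hx t, hy t, hz t, hξ]
      simp only [hA, hBx]
      linear_combination (Real.exp ((k/2) * t) * Real.sin (u/2 * t) * (x₀ - z₀ - k * ε) / 2) * hs2 - (Real.exp ((k/2) * t) * Real.cos (u/2 * t) * (k * (z₀ + k * ε + x₀) - 2 * (y₀ + ε)) / 2) * hmul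
    · have h := aux_deriv (k * (z₀ + k * ε) - ε) (k * ε) (k/2) Ay By ξ t
      rw [← hyf] at h
      convert h using 1
      rw [hx t, hz t, hξ]
      simp only [hAy, hBy, hBx]
      linear_combination (Real.exp ((k/2) * t) * Real.sin (u/2 * t) * (-k * (z₀ + k * ε) + (y₀ + ε)) / 2) * hs2 - (Real.exp ((k/2) * t) * Real.cos (u/2 * t) * (k ^ 2 * (z₀ + k * ε) - k * (y₀ + ε) + 2 * (x₀ - z₀ - k * ε)) / 2) * hmul
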